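/- Let W'_1, …, W'_n be independent random variables with W'_i ∼ Binomial(u_i, 2w_i/u_i) where 0 ≤ w_i ≤ u_i/2 and u_i is a positive integer. Let ā_i ∈ [0,1] with ∑_i ā_i w_i ≥ 1. Then E[∑ c_i W'_i] = 2·∑ c_i w_i, E[∑ ā_i W'_i] ≥ 2, and Pr[∑_i ā_i W'_i < 1] ≤ 8/9. -/

import Mathlib

open MeasureTheory ProbabilityTheory Finset

lemma binom_sum0 (p : ℝ) (n : ℕ) :
    ∑ m ∈ range (n+1), (n.choose m : ℝ) * p ^ m * (1 - p) ^ (n - m) = 1 := by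
  have := congrArg (Polynomial.eval p) (bernsteinPolynomial.sum ℝ n)
  simpa [bernsteinPolynomial, Polynomial.eval_finset_sum] using this

lemma binom_sum1 (p : ℝ) (n : ℕ) :
    ∑ m ∈ range (n+1), (m : ℝ) * ((n.choose m : ℝ) * p ^ m * (1 - p) ^ (n - m)) = n * p := by
  have := congrArg (Polynomial.eval p) (bernsteinPolynomial.sum_smul ℝ n)
  simpa [bernsteinPolynomial, Polynomial.eval_finset_sum, mul_comm, mul_assoc, mul_left_comm] using this

lemma binom_sum2 (p : ℝ) (n : ℕ) :
    ∑ m ∈ range (n+1), ((m * (m-1) : ℕ) : ℝ) * ((n.choose m : ℝ) * p ^ m * (1 - p) ^ (n - m)) = (n * (n-1) : ℕ) * p^2 := by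
  have := congrArg (Polynomial.eval p) (bernsteinPolynomial.sum_mul_smul ℝ n)
  simpa [bernsteinPolynomial, Polynomial.eval_finset_sum, mul_comm, mul_assoc, mul_left_comm] using this

lemma exp_fun {Ω : Type*} [MeasurableSpace Ω] (μ : Measure Ω) [IsProbabilityMeasure μ]
    (X : Ω → ℕ) (hX : Measurable X) (u : ℕ) (hle : ∀ ω, X ω ≤ u) (g : ℕ → ℝ) :
    ∫ ω, g (X ω) ∂μ = ∑ m ∈ range (u+1), g m * (μ {ω | X ω = m}).toReal := by
  have hms : ∀ m : ℕ, MeasurableSet {ω | X ω = m} := fun m => hX (measurableSet_singleton m)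
  have h1 : (fun ω => g (X ω)) =
      fun ω => ∑ m ∈ range (u+1), Set.indicator {ω | X ω = m} (fun _ => g m) ω := by
    funext ω
    have : ∀ m ∈ range (u+1), Set.indicator {ω | X ω = m} (fun _ => g m) ω
        = if X ω = m then g m else 0 := by
      intro m _
      simp [Set.indicator_apply, Set.mem_setOf_eq]
    rw [Finset.sum_congr rfl this, Finset.sum_ite_eq, if_pos (mem_range.2 (Nat.lt_succ_of_le (hle ω)))]
  rw [h1, integral_finset_sum]
  · refine Finset.sum_congr rfl fun m _ => ?_
    rw [integral_indicator_const _ (hms m), smul_eq_mul, mul_comm, measureReal_def]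
  · exact fun m _ => (integrable_const (g m)).indicator (hms m)

lemma pmf_toReal {Ω : Type*} [MeasurableSpace Ω] (μ : Measure Ω)
    (X : Ω → ℕ) (u : ℕ) (p : ℝ) (hp0 : 0 ≤ p) (hp1 : p ≤ 1)
    (hd : ∀ m ≤ u, μ {ω | X ω = m} = ENNReal.ofReal ((u.choose m : ℝ) * p ^ m * (1 - p) ^ (u - m))) :
    ∀ m ∈ range (u+1), (μ {ω | X ω = m}).toReal = (u.choose m : ℝ) * p ^ m * (1 - p) ^ (u - m) := by
  intro m hm
  rw [hd m (Nat.lt_succ_iff.1 (mem_range.1 hm)), ENNReal.toReal_ofReal]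
  have : (0:ℝ) ≤ 1 - p := by linarith
  positivity

lemma EX {Ω : Type*} [MeasurableSpace Ω] (μ : Measure Ω) [IsProbabilityMeasure μ]
    (X : Ω → ℕ) (hX : Measurable X) (u : ℕ) (hle : ∀ ω, X ω ≤ u)
    (p : ℝ) (hp0 : 0 ≤ p) (hp1 : p ≤ 1)
    (hd : ∀ m ≤ u, μ {ω | X ω = m} = ENNReal.ofReal ((u.choose m : ℝ) * p ^ m * (1 - p) ^ (u - m))) :
    ∫ ω, (X ω : ℝ) ∂μ = u * p := by
  rw [exp_fun μ X hX u hle (fun m => (m:ℝ)),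
    Finset.sum_congr rfl (fun m hm => by rw [pmf_toReal μ X u p hp0 hp1 hd m hm]),
    binom_sum1]

lemma EX2 {Ω : Type*} [MeasurableSpace Ω] (μ : Measure Ω) [IsProbabilityMeasure μ]
    (X : Ω → ℕ) (hX : Measurable X) (u : ℕ) (hle : ∀ ω, X ω ≤ u)
    (p : ℝ) (hp0 : 0 ≤ p) (hp1 : p ≤ 1)
    (hd : ∀ m ≤ u, μ {ω | X ω = m} = ENNReal.ofReal ((u.choose m : ℝ) * p ^ m * (1 - p) ^ (u - m))) :
    ∫ ω, (X ω : ℝ)^2 ∂μ ≤ (u * p)^2 + u * p := by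
  have key : ∫ ω, (X ω : ℝ)^2 ∂μ = ((u * (u-1) : ℕ) : ℝ) * p^2 + u * p := by
    rw [exp_fun μ X hX u hle (fun m => (m:ℝ)^2),
      Finset.sum_congr rfl (fun m hm => by rw [pmf_toReal μ X u p hp0 hp1 hd m hm])]
    have cast_eq : ∀ m : ℕ, ((m:ℝ))^2 = ((m * (m-1) : ℕ) : ℝ) + (m:ℝ) := by
      intro m
      cases m with
      | zero => simp
      | succ k => push_cast [Nat.succ_sub_one]; ring
    rw [Finset.sum_congr rfl (fun m _ => by rw [cast_eq m, add_mul]), Finset.sum_add_distrib,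
      binom_sum1, binom_sum2]
  rw [key]
  have h1 : ((u * (u-1) : ℕ) : ℝ) ≤ (u:ℝ)^2 := by
    have : u * (u-1) ≤ u * u := Nat.mul_le_mul_left u (Nat.sub_le u 1)
    calc ((u * (u-1) : ℕ) : ℝ) ≤ ((u*u : ℕ) : ℝ) := by exact_mod_cast this
    _ = (u:ℝ)^2 := by push_cast; ring
  nlinarith [mul_le_mul_of_nonneg_right h1 (sq_nonneg p)]

theorem stmt_8 {Ω : Type*} [MeasureSpace Ω] (μ : Measure Ω) [IsProbabilityMeasure μ]
    (n : ℕ) (W : Fin n → Ω → ℕ) (hmeas : ∀ i, Measurable (W i))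
    (hindep : iIndepFun W μ)
    (u : Fin n → ℕ) (hu : ∀ i, 0 < u i)
    (w c : Fin n → ℝ) (hw0 : ∀ i, 0 ≤ w i) (hw : ∀ i, w i ≤ (u i : ℝ) / 2)
    (hc : ∀ i, 0 ≤ c i)
    (abar : Fin n → ℝ) (habar : ∀ i, abar i ∈ Set.Icc (0 : ℝ) 1)
    (hfrac : ∑ i, abar i * w i ≥ 1)
    (hle : ∀ i, ∀ ω, W i ω ≤ u i)
    -- W i is distributed as Binomial(u i, 2 w i / u i):
    (hbinom : ∀ i, ∀ m ≤ u i,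
      μ {ω | W i ω = m} = ENNReal.ofReal
        ((u i).choose m * (2 * w i / u i) ^ m * (1 - 2 * w i / u i) ^ (u i - m))) :
    (∫ ω, ∑ i, c i * (W i ω : ℝ) ∂μ) = 2 * ∑ i, c i * w i ∧
    (∫ ω, ∑ i, abar i * (W i ω : ℝ) ∂μ) ≥ 2 ∧
    μ {ω | ∑ i, abar i * (W i ω : ℝ) < 1} ≤ ENNReal.ofReal (8 / 9) := by
  have hu0 : ∀ i, (0:ℝ) < u i := fun i => by exact_mod_cast hu i
  have hp0 : ∀ i, 0 ≤ 2 * w i / u i := fun i => div_nonneg (by linarith [hw0 i]) (hu0 i).le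
  have hp1 : ∀ i, 2 * w i / u i ≤ 1 := fun i => (div_le_one (hu0 i)).2 (by linarith [hw i])
  have hup : ∀ i, (u i : ℝ) * (2 * w i / u i) = 2 * w i := fun i => by
    rw [mul_comm, div_mul_eq_mul_div, mul_div_assoc, div_self (ne_of_gt (hu0 i)), mul_one]
  have hcastmeas : Measurable (fun m : ℕ => (m : ℝ)) := measurable_from_top
  have hWmeas : ∀ i, Measurable (fun ω => (W i ω : ℝ)) := fun i =>
    hcastmeas.comp (hmeas i)
  have EWi : ∀ i, ∫ ω, (W i ω : ℝ) ∂μ = 2 * w i := fun i => by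
    rw [EX μ (W i) (hmeas i) (u i) (hle i) _ (hp0 i) (hp1 i) (hbinom i), hup i]
  have EW2i : ∀ i, ∫ ω, (W i ω : ℝ)^2 ∂μ ≤ (2 * w i)^2 + 2 * w i := fun i => by
    have := EX2 μ (W i) (hmeas i) (u i) (hle i) _ (hp0 i) (hp1 i) (hbinom i)
    rwa [hup i] at this
  have intW : ∀ i, Integrable (fun ω => (W i ω : ℝ)) μ := fun i => by
    refine Integrable.mono' (integrable_const (u i : ℝ)) (hWmeas i).aestronglyMeasurable
      (ae_of_all _ fun ω => ?_)
    rw [Real.norm_eq_abs, abs_of_nonneg (Nat.cast_nonneg _)]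
    exact_mod_cast hle i ω
  have intWW : ∀ i j, Integrable (fun ω => (W i ω : ℝ) * (W j ω : ℝ)) μ := fun i j => by
    refine Integrable.mono' (integrable_const ((u i : ℝ) * (u j : ℝ)))
      ((hWmeas i).mul (hWmeas j)).aestronglyMeasurable (ae_of_all _ fun ω => ?_)
    rw [Real.norm_eq_abs, abs_of_nonneg (mul_nonneg (Nat.cast_nonneg _) (Nat.cast_nonneg _))]
    have h1 : (W i ω : ℝ) ≤ u i := by exact_mod_cast hle i ω
    have h2 : (W j ω : ℝ) ≤ u j := by exact_mod_cast hle j ω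
    exact mul_le_mul h1 h2 (Nat.cast_nonneg _) (Nat.cast_nonneg _)
  have EWW : ∀ i j, i ≠ j → ∫ ω, (W i ω : ℝ) * (W j ω : ℝ) ∂μ = (2 * w i) * (2 * w j) := by
    intro i j hij
    have hind : IndepFun (fun ω => (W i ω : ℝ)) (fun ω => (W j ω : ℝ)) μ :=
      (hindep.indepFun hij).comp hcastmeas hcastmeas
    have h := hind.integral_mul_eq_mul_integral (intW i).aestronglyMeasurable (intW j).aestronglyMeasurable
    rw [EWi i, EWi j] at h
    exact h
  -- generic expectation of linear combination
  have Elin : ∀ d : Fin n → ℝ, ∫ ω, ∑ i, d i * (W i ω : ℝ) ∂μ = 2 * ∑ i, d i * w i := by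
    intro d
    rw [integral_finset_sum _ (fun i _ => (intW i).const_mul (d i))]
    rw [Finset.sum_congr rfl (fun i _ => by rw [integral_const_mul, EWi i]), Finset.mul_sum]
    exact Finset.sum_congr rfl fun i _ => by ring
  refine ⟨Elin c, by rw [Elin abar]; linarith [hfrac], ?_⟩
  -- tail bound
  set S : Ω → ℝ := fun ω => ∑ i, abar i * (W i ω : ℝ) with hSdef
  have hSmeas : Measurable S :=
    Finset.measurable_sum _ fun i _ => (hWmeas i).const_mul (abar i)
  have intS : Integrable S μ := integrable_finset_sum _ fun i _ => (intW i).const_mul (abar i)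
  set m : ℝ := 2 * ∑ i, abar i * w i with hmdef
  have ES : ∫ ω, S ω ∂μ = m := Elin abar
  have hm2 : 2 ≤ m := by rw [hmdef]; linarith [hfrac]
  have hS0 : ∀ ω, 0 ≤ S ω := fun ω =>
    Finset.sum_nonneg fun i _ => mul_nonneg (habar i).1 (Nat.cast_nonneg _)
  -- second moment
  set D : Fin n → ℝ := fun i => abar i * (2 * w i) with hDdef
  have hDm : ∑ i, D i = m := by rw [hmdef, Finset.mul_sum]; exact Finset.sum_congr rfl fun i _ => by ring
  have hD0 : ∀ i, 0 ≤ D i := fun i => mul_nonneg (habar i).1 (by linarith [hw0 i])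
  have hS2expand : (fun ω => S ω ^ 2) =
      fun ω => ∑ i, ∑ j, (abar i * abar j) * ((W i ω : ℝ) * (W j ω : ℝ)) := by
    funext ω
    rw [sq, hSdef, Finset.sum_mul_sum]
    exact Finset.sum_congr rfl fun i _ => Finset.sum_congr rfl fun j _ => by ring
  have intS2 : Integrable (fun ω => S ω ^ 2) μ := by
    rw [hS2expand]
    exact integrable_finset_sum _ fun i _ => integrable_finset_sum _ fun j _ =>
      ((intWW i j).const_mul _)
  have ES2 : ∫ ω, S ω ^ 2 ∂μ ≤ m ^ 2 + m := by
    rw [hS2expand, integral_finset_sum _ (fun i _ => integrable_finset_sum _ fun j _ =>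
      ((intWW i j).const_mul _))]
    have step : ∀ i, ∫ ω, ∑ j, (abar i * abar j) * ((W i ω : ℝ) * (W j ω : ℝ)) ∂μ
        = ∑ j, (abar i * abar j) * ∫ ω, (W i ω : ℝ) * (W j ω : ℝ) ∂μ := by
      intro i
      rw [integral_finset_sum _ (fun j _ => ((intWW i j).const_mul _))]
      exact Finset.sum_congr rfl fun j _ => integral_const_mul _ _
    rw [Finset.sum_congr rfl fun i _ => step i]
    have hbound : ∑ i, ∑ j, (abar i * abar j) * ∫ ω, (W i ω : ℝ) * (W j ω : ℝ) ∂μ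
        ≤ ∑ i, ∑ j, (D i * D j + if i = j then D i else 0) := by
      refine Finset.sum_le_sum fun i _ => Finset.sum_le_sum fun j _ => ?_
      by_cases h : i = j
      · subst h
        rw [if_pos rfl]
        have hE : ∫ ω, (W i ω : ℝ) * (W i ω : ℝ) ∂μ ≤ (2 * w i)^2 + 2 * w i := by
          have := EW2i i
          have heq : (fun ω => (W i ω : ℝ)^2) = fun ω => (W i ω : ℝ) * (W i ω : ℝ) := by
            funext ω; ring
          rwa [heq] at this
        have ha0 := (habar i).1
        have ha1 := (habar i).2
        have hwi := hw0 i
        simp only [hDdef]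
        nlinarith [mul_le_mul_of_nonneg_left hE (mul_nonneg ha0 ha0),
          mul_nonneg (mul_nonneg ha0 (by linarith : (0:ℝ) ≤ 1 - abar i)) hwi]
      · rw [if_neg h, add_zero, EWW i j h]
        simp only [hDdef]
        exact le_of_eq (by ring)
    refine hbound.trans ?_
    have heq2 : ∑ i, ∑ j, (D i * D j + if i = j then D i else 0)
        = (∑ i, D i) * (∑ j, D j) + ∑ i, D i := by
      calc ∑ i, ∑ j, (D i * D j + if i = j then D i else 0)
          = ∑ i, ((∑ j, D i * D j) + D i) := by
            refine Finset.sum_congr rfl fun i _ => ?_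
            rw [Finset.sum_add_distrib, Finset.sum_ite_eq, if_pos (Finset.mem_univ i)]
        _ = (∑ i, ∑ j, D i * D j) + ∑ i, D i := Finset.sum_add_distrib
        _ = (∑ i, D i) * (∑ j, D j) + ∑ i, D i := by rw [Finset.sum_mul_sum]
    rw [heq2, hDm]
    exact le_of_eq (by ring)
  -- the event
  set A : Set Ω := {ω | (1:ℝ) ≤ S ω} with hAdef
  have hA : MeasurableSet A := measurableSet_le measurable_const hSmeas
  set ind : Ω → ℝ := A.indicator (fun _ => (1:ℝ)) with hinddef
  have intInd : Integrable ind μ := (integrable_const 1).indicator hA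
  have hIndInt : ∫ ω, ind ω ∂μ = (μ A).toReal := by
    rw [hinddef, integral_indicator_const _ hA, smul_eq_mul, mul_one, measureReal_def]
  set P : ℝ := (μ A).toReal with hPdef
  have hind01 : ∀ ω, ind ω = 0 ∨ ind ω = 1 := fun ω => by
    by_cases h : ω ∈ A
    · right; rw [hinddef, Set.indicator_of_mem h]
    · left; rw [hinddef, Set.indicator_of_notMem h]
  have intSInd : Integrable (fun ω => S ω * ind ω) μ := by
    refine intS.norm.mono' (hSmeas.mul (measurable_const.indicator hA)).aestronglyMeasurable
      (ae_of_all _ fun ω => ?_)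
    rcases hind01 ω with h | h <;> simp [Real.norm_eq_abs, h, abs_mul, abs_nonneg]
  have step1 : m - 1 ≤ ∫ ω, S ω * ind ω ∂μ := by
    have hpt : ∀ ω, S ω ≤ S ω * ind ω + 1 := by
      intro ω
      by_cases h : ω ∈ A
      · rw [hinddef, Set.indicator_of_mem h]; nlinarith [hS0 ω]
      · rw [hinddef, Set.indicator_of_notMem h]
        have : S ω < 1 := not_le.1 h
        linarith
    have := integral_mono intS (intSInd.add (integrable_const 1)) hpt
    simp only [Pi.add_apply] at this
    rw [integral_add intSInd (integrable_const 1), integral_const, probReal_univ] at this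
    simp only [ENNReal.toReal_one, smul_eq_mul, one_mul] at this
    rw [ES] at this
    linarith
  -- Cauchy-Schwarz via AM-GM pointwise
  have hm1 : (0:ℝ) < m - 1 := by linarith
  have hmm : (0:ℝ) < m^2 + m := by nlinarith
  set t : ℝ := (m - 1) / (m^2 + m) with htdef
  set s : ℝ := (m^2 + m) / (m - 1) with hsdef
  have ht : 0 < t := div_pos hm1 hmm
  have hs : 0 < s := div_pos hmm hm1
  have hts : t * s = 1 := by rw [htdef, hsdef]; field_simp
  have hpt2 : ∀ ω, 2 * (S ω * ind ω) ≤ t * S ω ^ 2 + s * ind ω := by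
    intro ω
    by_cases h : ω ∈ A
    · rw [hinddef, Set.indicator_of_mem h]
      nlinarith [sq_nonneg (t * S ω - 1), ht, hts]
    · rw [hinddef, Set.indicator_of_notMem h]
      nlinarith [sq_nonneg (S ω), ht.le]
  have step2 : 2 * (m - 1) ≤ t * (m^2 + m) + s * P := by
    have hint := integral_mono (intSInd.const_mul 2)
      ((intS2.const_mul t).add (intInd.const_mul s)) hpt2
    simp only [Pi.add_apply] at hint
    rw [integral_add (intS2.const_mul t) (intInd.const_mul s), integral_const_mul,
      integral_const_mul, integral_const_mul, hIndInt] at hint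
    have h1 : t * ∫ ω, S ω ^ 2 ∂μ ≤ t * (m^2 + m) := mul_le_mul_of_nonneg_left ES2 ht.le
    have h2 : 2 * (m - 1) ≤ 2 * ∫ ω, S ω * ind ω ∂μ := by linarith [step1]
    linarith
  have ht2 : t * (m^2 + m) = m - 1 := by rw [htdef]; field_simp
  have hsP : m - 1 ≤ s * P := by linarith [step2, ht2]
  have hP16 : 1/6 ≤ P := by
    have hkey : (m - 1) * (m - 1) ≤ (m^2 + m) * P := by
      have := mul_le_mul_of_nonneg_right hsP hm1.le
      have hss : s * (m - 1) = m^2 + m := by rw [hsdef]; field_simp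
      nlinarith [this]
    nlinarith [hkey, hmm, hm2]
  -- finish in ENNReal
  have hset : {ω | ∑ i, abar i * (W i ω : ℝ) < 1} = Aᶜ := by
    ext ω
    simp only [hAdef, Set.mem_compl_iff, Set.mem_setOf_eq, not_le, hSdef]
  rw [hset, measure_compl hA (measure_ne_top μ A), measure_univ]
  have hμA : ENNReal.ofReal (1/6) ≤ μ A :=
    ENNReal.ofReal_le_of_le_toReal (by rw [← hPdef]; exact hP16)
  calc (1:ENNReal) - μ A ≤ 1 - ENNReal.ofReal (1/6) := tsub_le_tsub_left hμA 1
    _ ≤ ENNReal.ofReal (8/9) := by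
        rw [← ENNReal.ofReal_one, ← ENNReal.ofReal_sub _ (by norm_num : (0:ℝ) ≤ 1/6)]
        exact ENNReal.ofReal_le_ofReal (by norm_num)
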